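/- Let v : Ω → ℝ be measurable with v(x) > 0 for a.e. x ∈ Ω. Then the following three conditions are equivalent: (a) the function x ↦ h(x)·v(x)^(1−γ) is integrable on Ω; (b) the function x ↦ h(x)·g(v(x))^(−γ)·g'(v(x))·v(x) is integrable on Ω; (c) the function x ↦ h(x)·g(v(x))^(1−γ) is integrable on Ω. -/

import Mathlib

open MeasureTheory Real

section Aux

variable {g : ℝ → ℝ}

private lemma g_strictMono
    (hg : ∀ t : ℝ, HasDerivAt g ((1 + 2 * g t ^ 2) ^ (-(1 / 2) : ℝ)) t) :
    StrictMono g :=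
  strictMono_of_hasDerivAt_pos hg fun t => Real.rpow_pos_of_pos (by positivity) _

private lemma g_le_self (hg0 : g 0 = 0)
    (hg : ∀ t : ℝ, HasDerivAt g ((1 + 2 * g t ^ 2) ^ (-(1 / 2) : ℝ)) t)
    {t : ℝ} (ht : 0 ≤ t) : g t ≤ t := by
  have hmono : Monotone (fun t => t - g t) := by
    refine monotone_of_hasDerivAt_nonneg
      (f' := fun t => 1 - (1 + 2 * g t ^ 2) ^ (-(1 / 2) : ℝ))
      (fun t => (hasDerivAt_id t).sub (hg t)) (fun t => ?_)
    have h1 : (1 + 2 * g t ^ 2 : ℝ) ^ (-(1 / 2) : ℝ) ≤ 1 :=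
      Real.rpow_le_one_of_one_le_of_nonpos (by nlinarith [sq_nonneg (g t)]) (by norm_num)
    simp only [Pi.zero_apply, sub_nonneg]
    exact h1
  have := hmono ht
  simp only [hg0, sub_zero] at this
  linarith

private lemma g_pos (hg0 : g 0 = 0)
    (hg : ∀ t : ℝ, HasDerivAt g ((1 + 2 * g t ^ 2) ^ (-(1 / 2) : ℝ)) t)
    {t : ℝ} (ht : 0 < t) : 0 < g t := by
  have := g_strictMono hg ht
  rwa [hg0] at this

/-- the key lower bound `t * g' t ≤ g t`. -/
private lemma g_ge (hg0 : g 0 = 0)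
    (hg : ∀ t : ℝ, HasDerivAt g ((1 + 2 * g t ^ 2) ^ (-(1 / 2) : ℝ)) t)
    {t : ℝ} (ht : 0 ≤ t) : t * (1 + 2 * g t ^ 2) ^ (-(1 / 2) : ℝ) ≤ g t := by
  rcases eq_or_lt_of_le ht with h0 | ht
  · simp [← h0, hg0]
  obtain ⟨c, hc, hceq⟩ := exists_hasDerivAt_eq_slope g
      (fun s => (1 + 2 * g s ^ 2) ^ (-(1 / 2) : ℝ)) ht
      (fun s _ => ((hg s).differentiableAt.continuousAt).continuousWithinAt)
      (fun s _ => hg s)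
  rw [hg0, sub_zero, sub_zero] at hceq
  have hgc : g c ≤ g t := (g_strictMono hg).le_iff_le.2 hc.2.le
  have hgc0 : 0 ≤ g c := by
    have := (g_strictMono hg).le_iff_le.2 hc.1.le
    rwa [hg0] at this
  have hmono : (1 + 2 * g t ^ 2 : ℝ) ^ (-(1 / 2) : ℝ) ≤ (1 + 2 * g c ^ 2) ^ (-(1 / 2) : ℝ) := by
    apply Real.rpow_le_rpow_of_nonpos (by positivity) (by nlinarith) (by norm_num)
  rw [hceq] at hmono
  calc t * (1 + 2 * g t ^ 2) ^ (-(1 / 2) : ℝ) ≤ t * (g t / t) := by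
        exact mul_le_mul_of_nonneg_left hmono ht.le
    _ = g t := by field_simp

/-- comparison principle for integrability. -/
private lemma integ_aux {α : Type*} [MeasurableSpace α] {μ : Measure α}
    {f b h : α → ℝ} (C₁ C₂ : ℝ)
    (hb : Integrable (fun x => h x * b x) μ) (hh : Integrable h μ)
    (hf : AEStronglyMeasurable (fun x => h x * f x) μ)
    (hbd : ∀ᵐ x ∂μ, |h x * f x| ≤ C₁ * |h x * b x| + C₂ * |h x|) :
    Integrable (fun x => h x * f x) μ :=
  Integrable.mono' ((hb.abs.const_mul C₁).add (hh.abs.const_mul C₂)) hf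
    (by filter_upwards [hbd] with x hx; simpa only [Real.norm_eq_abs, Pi.add_apply] using hx)

end Aux

set_option maxHeartbeats 1000000 in
/-- equivalence of the three integrability conditions for a
positive measurable `v` on the bounded domain `Ω`. -/
theorem stmt_13 (N : ℕ) (hN : 3 ≤ N)
    (Ω : Set (EuclideanSpace ℝ (Fin N))) (hΩo : IsOpen Ω)
    (hΩb : Bornology.IsBounded Ω) (hΩpos : 0 < volume Ω)
    (γ : ℝ) (hγ : 1 < γ)
    (g : ℝ → ℝ) (hg0 : g 0 = 0)
    (hg : ∀ t : ℝ, HasDerivAt g ((1 + 2 * g t ^ 2) ^ (-(1 / 2) : ℝ)) t)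
    (h : EuclideanSpace ℝ (Fin N) → ℝ)
    (hh_int : IntegrableOn h Ω)
    (hh_pos : ∀ᵐ x ∂(volume.restrict Ω), 0 < h x)
    (v : EuclideanSpace ℝ (Fin N) → ℝ)
    (hv_meas : AEMeasurable v (volume.restrict Ω))
    (hv_pos : ∀ᵐ x ∂(volume.restrict Ω), 0 < v x) :
    (IntegrableOn (fun x => h x * v x ^ (1 - γ)) Ω ↔
      IntegrableOn (fun x => h x * g (v x) ^ (-γ) * deriv g (v x) * v x) Ω) ∧
    (IntegrableOn (fun x => h x * g (v x) ^ (-γ) * deriv g (v x) * v x) Ω ↔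
      IntegrableOn (fun x => h x * g (v x) ^ (1 - γ)) Ω) := by
  set μ := volume.restrict Ω with hμ
  set D : ℝ → ℝ := fun t => (1 + 2 * g t ^ 2) ^ (-(1 / 2) : ℝ) with hD
  have hderiv : deriv g = D := funext fun t => (hg t).deriv
  -- continuity / measurability preliminaries
  have hgc : Continuous g :=
    continuous_iff_continuousAt.2 fun t => (hg t).differentiableAt.continuousAt
  have hDc : Continuous D := by
    apply Continuous.rpow_const
    · continuity
    · intro t; left; positivity
  have hgv : AEMeasurable (fun x => g (v x)) μ := hgc.measurable.comp_aemeasurable hv_meas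
  have hDv : AEMeasurable (fun x => D (v x)) μ := hDc.measurable.comp_aemeasurable hv_meas
  have hhm : AEStronglyMeasurable h μ := hh_int.aestronglyMeasurable
  have hFa : AEStronglyMeasurable (fun x => h x * v x ^ (1 - γ)) μ :=
    hhm.mul (hv_meas.pow aemeasurable_const).aestronglyMeasurable
  have hFc : AEStronglyMeasurable (fun x => h x * g (v x) ^ (1 - γ)) μ :=
    hhm.mul (hgv.pow aemeasurable_const).aestronglyMeasurable
  have hFb : AEStronglyMeasurable
      (fun x => h x * (g (v x) ^ (-γ) * D (v x) * v x)) μ :=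
    hhm.mul (((hgv.pow aemeasurable_const).mul hDv).mul hv_meas).aestronglyMeasurable
  -- the constants
  set c : ℝ := (3 : ℝ) ^ (-(1 / 2) : ℝ) with hc
  have hc0 : 0 < c := Real.rpow_pos_of_pos (by norm_num) _
  have hc1 : c ≤ 1 := Real.rpow_le_one_of_one_le_of_nonpos (by norm_num) (by norm_num)
  set C : ℝ := c ^ (1 - γ) with hC
  have hC0 : 0 < C := Real.rpow_pos_of_pos hc0 _
  -- pointwise facts, valid whenever 0 < w
  have key : ∀ w : ℝ, 0 < w →
      0 < g w ∧ g w ≤ w ∧ w * D w ≤ g w ∧ 0 < D w ∧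
      (w ≤ 1 → c ≤ D w) ∧ (1 ≤ w → c ≤ g w) := by
    intro w hw
    have hgpos : 0 < g w := g_pos hg0 hg hw
    have hgle : g w ≤ w := g_le_self hg0 hg hw.le
    have hgge : w * D w ≤ g w := g_ge hg0 hg hw.le
    have hDpos : 0 < D w := Real.rpow_pos_of_pos (by positivity) _
    have hDge : w ≤ 1 → c ≤ D w := by
      intro hw1
      have : (1 + 2 * g w ^ 2 : ℝ) ≤ 3 := by nlinarith
      exact Real.rpow_le_rpow_of_nonpos (by positivity) this (by norm_num)
    have hgge1 : 1 ≤ w → c ≤ g w := by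
      intro hw1
      have h1 : g 1 ≤ g w := (g_strictMono hg).le_iff_le.2 hw1
      have h2 : (1 : ℝ) * D 1 ≤ g 1 := g_ge hg0 hg (by norm_num)
      have h3 : c ≤ D 1 := by
        have hg1 : g 1 ≤ 1 := g_le_self hg0 hg (by norm_num)
        have hg1' : 0 < g 1 := g_pos hg0 hg (by norm_num)
        have : (1 + 2 * g 1 ^ 2 : ℝ) ≤ 3 := by nlinarith
        exact Real.rpow_le_rpow_of_nonpos (by positivity) this (by norm_num)
      nlinarith
    exact ⟨hgpos, hgle, hgge, hDpos, hDge, hgge1⟩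
  have hexp : (1 - γ : ℝ) ≤ 0 := by linarith
  -- bound (2): G^(1-γ) ≤ C * w^(1-γ) + C
  have bound2 : ∀ w : ℝ, 0 < w → g w ^ (1 - γ) ≤ C * w ^ (1 - γ) + C := by
    intro w hw
    obtain ⟨hgpos, hgle, hgge, hDpos, hDge, hgge1⟩ := key w hw
    rcases le_or_gt w 1 with hw1 | hw1
    · have h1 : c * w ≤ g w := by
        have := hDge hw1
        nlinarith
      have h2 : g w ^ (1 - γ) ≤ (c * w) ^ (1 - γ) :=
        Real.rpow_le_rpow_of_nonpos (by positivity) h1 hexp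
      have h3 : (c * w) ^ (1 - γ) = C * w ^ (1 - γ) := by
        rw [Real.mul_rpow hc0.le hw.le]
      have h4 : 0 ≤ C := hC0.le
      nlinarith [h2, h3.le, h4]
    · have h1 : g w ^ (1 - γ) ≤ c ^ (1 - γ) :=
        Real.rpow_le_rpow_of_nonpos hc0 (hgge1 hw1.le) hexp
      have h5 : 0 < w ^ (1 - γ) := Real.rpow_pos_of_pos hw _
      nlinarith
  -- bound (3): G^(-γ) * D w * w ≤ G^(1-γ)
  have bound3 : ∀ w : ℝ, 0 < w → g w ^ (-γ) * D w * w ≤ g w ^ (1 - γ) := by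
    intro w hw
    obtain ⟨hgpos, hgle, hgge, hDpos, hDge, hgge1⟩ := key w hw
    have h1 : g w ^ (-γ) * (D w * w) ≤ g w ^ (-γ) * g w := by
      apply mul_le_mul_of_nonneg_left (by linarith [hgge]) (Real.rpow_pos_of_pos hgpos _).le
    have h2 : g w ^ (-γ) * g w = g w ^ (1 - γ) := by
      rw [show (1 - γ) = -γ + 1 by ring, Real.rpow_add_one hgpos.ne']
    calc g w ^ (-γ) * D w * w = g w ^ (-γ) * (D w * w) := by ring
      _ ≤ g w ^ (-γ) * g w := h1
      _ = g w ^ (1 - γ) := h2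
  -- bound (4): G^(1-γ) ≤ c⁻¹ * (G^(-γ)*D w*w) + C
  have bound4 : ∀ w : ℝ, 0 < w →
      g w ^ (1 - γ) ≤ c⁻¹ * (g w ^ (-γ) * D w * w) + C := by
    intro w hw
    obtain ⟨hgpos, hgle, hgge, hDpos, hDge, hgge1⟩ := key w hw
    rcases le_or_gt w 1 with hw1 | hw1
    · have hDc' := hDge hw1
      have h2 : g w ^ (-γ) * g w = g w ^ (1 - γ) := by
        rw [show (1 - γ) = -γ + 1 by ring, Real.rpow_add_one hgpos.ne']
      have hGn : 0 < g w ^ (-γ) := Real.rpow_pos_of_pos hgpos _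
      have h1 : g w ^ (-γ) * g w ≤ g w ^ (-γ) * w :=
        mul_le_mul_of_nonneg_left hgle hGn.le
      have h3 : w ≤ c⁻¹ * (D w * w) := by
        have h5 : (1 : ℝ) ≤ c⁻¹ * D w := by
          rw [← div_eq_inv_mul]
          exact (one_le_div hc0).2 hDc'
        nlinarith
      have h4 : g w ^ (-γ) * w ≤ g w ^ (-γ) * (c⁻¹ * (D w * w)) :=
        mul_le_mul_of_nonneg_left h3 hGn.le
      calc g w ^ (1 - γ) = g w ^ (-γ) * g w := h2.symm
        _ ≤ g w ^ (-γ) * w := h1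
        _ ≤ g w ^ (-γ) * (c⁻¹ * (D w * w)) := h4
        _ = c⁻¹ * (g w ^ (-γ) * D w * w) := by ring
        _ ≤ c⁻¹ * (g w ^ (-γ) * D w * w) + C := by linarith
    · have h1 : g w ^ (1 - γ) ≤ c ^ (1 - γ) :=
        Real.rpow_le_rpow_of_nonpos hc0 (hgge1 hw1.le) hexp
      have hGn : 0 < g w ^ (-γ) := Real.rpow_pos_of_pos hgpos _
      have h5 : 0 ≤ c⁻¹ * (g w ^ (-γ) * D w * w) := by positivity
      linarith
  -- rewrite the `deriv g` and the associativity in the goal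
  have hb_eq : (fun x => h x * g (v x) ^ (-γ) * deriv g (v x) * v x)
      = fun x => h x * (g (v x) ^ (-γ) * D (v x) * v x) := by
    funext x; rw [hderiv]; ring
  rw [hb_eq]
  -- abbreviations for the three integrability statements
  set Pa := IntegrableOn (fun x => h x * v x ^ (1 - γ)) Ω with hPa
  set Pb := IntegrableOn (fun x => h x * (g (v x) ^ (-γ) * D (v x) * v x)) Ω with hPb
  set Pc := IntegrableOn (fun x => h x * g (v x) ^ (1 - γ)) Ω with hPc
  -- a.e. positivity helper
  have hca : Pc → Pa := by
    intro hint
    refine integ_aux 1 0 hint hh_int hFa ?_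
    filter_upwards [hh_pos, hv_pos] with x hx hvx
    obtain ⟨hgpos, hgle, _, _, _, _⟩ := key (v x) hvx
    have h1 : v x ^ (1 - γ) ≤ g (v x) ^ (1 - γ) :=
      Real.rpow_le_rpow_of_nonpos hgpos hgle hexp
    have h2 : 0 ≤ v x ^ (1 - γ) := (Real.rpow_pos_of_pos hvx _).le
    rw [abs_of_nonneg (by positivity), abs_of_nonneg (by positivity)]
    have := mul_le_mul_of_nonneg_left h1 hx.le
    nlinarith [abs_nonneg (h x)]
  have hac : Pa → Pc := by
    intro hint
    refine integ_aux C C hint hh_int hFc ?_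
    filter_upwards [hh_pos, hv_pos] with x hx hvx
    have h1 := bound2 (v x) hvx
    have h2 : 0 < v x ^ (1 - γ) := Real.rpow_pos_of_pos hvx _
    have h3 : 0 < g (v x) ^ (1 - γ) := Real.rpow_pos_of_pos (key (v x) hvx).1 _
    rw [abs_of_nonneg (by positivity), abs_of_nonneg (by positivity),
      abs_of_nonneg hx.le]
    calc h x * g (v x) ^ (1 - γ) ≤ h x * (C * v x ^ (1 - γ) + C) :=
          mul_le_mul_of_nonneg_left h1 hx.le
      _ = C * (h x * v x ^ (1 - γ)) + C * h x := by ring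
  have hcb : Pc → Pb := by
    intro hint
    refine integ_aux 1 0 hint hh_int hFb ?_
    filter_upwards [hh_pos, hv_pos] with x hx hvx
    obtain ⟨hgpos, hgle, hgge, hDpos, _, _⟩ := key (v x) hvx
    have h1 := bound3 (v x) hvx
    have hb0 : 0 ≤ g (v x) ^ (-γ) * D (v x) * v x := by
      have : 0 < g (v x) ^ (-γ) := Real.rpow_pos_of_pos hgpos _
      positivity
    rw [abs_of_nonneg (by positivity), abs_of_nonneg (by positivity)]
    have := mul_le_mul_of_nonneg_left h1 hx.le
    nlinarith [abs_nonneg (h x)]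
  have hbc : Pb → Pc := by
    intro hint
    refine integ_aux c⁻¹ C hint hh_int hFc ?_
    filter_upwards [hh_pos, hv_pos] with x hx hvx
    obtain ⟨hgpos, hgle, hgge, hDpos, _, _⟩ := key (v x) hvx
    have h1 := bound4 (v x) hvx
    have hb0 : 0 ≤ g (v x) ^ (-γ) * D (v x) * v x := by
      have : 0 < g (v x) ^ (-γ) := Real.rpow_pos_of_pos hgpos _
      positivity
    have h3 : 0 < g (v x) ^ (1 - γ) := Real.rpow_pos_of_pos hgpos _
    rw [abs_of_nonneg (by positivity), abs_of_nonneg (by positivity),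
      abs_of_nonneg hx.le]
    calc h x * g (v x) ^ (1 - γ)
        ≤ h x * (c⁻¹ * (g (v x) ^ (-γ) * D (v x) * v x) + C) :=
          mul_le_mul_of_nonneg_left h1 hx.le
      _ = c⁻¹ * (h x * (g (v x) ^ (-γ) * D (v x) * v x)) + C * h x := by ring
  exact ⟨⟨fun ha => hcb (hac ha), fun hb => hca (hbc hb)⟩, ⟨hbc, hcb⟩⟩
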